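/- Let G be a graph with exactly two vertices u, v of degree 1, and suppose G is strongly antimagic. Then for every integer k ≥ 1, the graph obtained from G by adding a new path of length k between u and v (adding k−1 new internal vertices) is strongly antimagic. -/

import Mathlib

open Finset

open scoped Classical

noncomputable section

variable {V : Type*} [Fintype V] [DecidableEq V]

/-- The finset of edges of a simple graph on a finite vertex type. -/
def edges (G : SimpleGraph V) : Finset (Sym2 V) :=
  Finset.univ.filter (fun e => e ∈ G.edgeSet)

/-- The vertex sum `φ_f(v)`: the sum of the labels of the edges incident to `v`. -/
def phi (G : SimpleGraph V) (f : Sym2 V → ℕ) (v : V) : ℕ :=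
  ∑ e ∈ (edges G).filter (fun e => v ∈ e), f e

/-- The degree of a vertex: the number of edges incident to it. -/
def deg (G : SimpleGraph V) (v : V) : ℕ :=
  ((edges G).filter (fun e => v ∈ e)).card

/-- `f` is a strongly antimagic labeling of `G`: a bijection from the edge set onto
`{1, …, m}` with pairwise distinct vertex sums, such that larger degree forces a
larger vertex sum. -/
def IsStronglyAntimagicLabeling (G : SimpleGraph V) (f : Sym2 V → ℕ) : Prop :=
  Set.BijOn f (edges G : Set (Sym2 V)) (Set.Icc 1 (edges G).card) ∧
  (∀ u v : V, u ≠ v → phi G f u ≠ phi G f v) ∧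
  (∀ u v : V, deg G v < deg G u → phi G f v < phi G f u)

/-- A graph is strongly antimagic if it admits a strongly antimagic labeling. -/
def IsStronglyAntimagic (G : SimpleGraph V) : Prop :=
  ∃ f : Sym2 V → ℕ, IsStronglyAntimagicLabeling G f

/-- Add a new path of length `k` between `a` and `b`, with `k - 1` new internal
vertices. -/
def addPath (G : SimpleGraph V) (a b : V) (k : ℕ) : SimpleGraph (V ⊕ Fin (k - 1)) :=
  SimpleGraph.fromEdgeSet (
    (Sym2.map Sum.inl '' G.edgeSet)
    ∪ {e | ∃ i j : Fin (k - 1), (j : ℕ) = (i : ℕ) + 1 ∧ e = s(Sum.inr i, Sum.inr j)}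
    ∪ {e | ∃ i : Fin (k - 1), (i : ℕ) = 0 ∧ e = s(Sum.inl a, Sum.inr i)}
    ∪ {e | ∃ i : Fin (k - 1), (i : ℕ) = k - 2 ∧ e = s(Sum.inl b, Sum.inr i)}
    ∪ (if k = 1 then {s(Sum.inl a, Sum.inl b)} else ∅))


private def lamN : ℕ → ℕ := fun i => i + 1

private def lamC : ℕ → ℕ := fun i => if i = 0 then 2 else if i = 1 then 1 else i + 1

private lemma lamN_def (i : ℕ) : lamN i = i + 1 := rfl

private lemma lamC_def (i : ℕ) : lamC i = if i = 0 then 2 else if i = 1 then 1 else i + 1 := rfl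

/-- Core combinatorial lemma: existence of a good labeling of the path edges,
assuming fa < fb. -/
lemma lam_spec_lt (k fa fb : ℕ) (hk : 1 ≤ k) (hfa : 1 ≤ fa) (hlt : fa < fb) :
    ∃ lam : ℕ → ℕ,
      (∀ i, i < k → 1 ≤ lam i ∧ lam i ≤ k) ∧
      (∀ i j, i < k → j < k → i ≠ j → lam i ≠ lam j) ∧
      (∀ t t', t + 1 < k → t' + 1 < k → t ≠ t' →
        lam t + lam (t+1) ≠ lam t' + lam (t'+1)) ∧
      (fa + lam 0 ≠ fb + lam (k-1)) ∧
      (∀ t, t + 1 < k → fa + k + lam 0 ≠ lam t + lam (t+1)) ∧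
      (∀ t, t + 1 < k → fb + k + lam (k-1) ≠ lam t + lam (t+1)) := by
  by_cases hc : 2 ∣ fa + k ∧ fa + 2 ≤ k
  · -- collision case: k ≥ 3, use 2,1,3,4,...,k
    obtain ⟨hpar, hle⟩ := hc
    have hk3 : 3 ≤ k := by omega
    have hsum : ∀ s, lamC s + lamC (s+1) =
        if s = 0 then 3 else if s = 1 then 4 else 2*s+3 := by
      intro s; rw [lamC_def, lamC_def]
      split_ifs <;> first | contradiction | omega
    have hend : lamC (k-1) = k := by
      rw [lamC_def]; split_ifs <;> omega
    have h0 : lamC 0 = 2 := rfl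
    refine ⟨lamC, ?_, ?_, ?_, ?_, ?_, ?_⟩
    · intro i hi; rw [lamC_def]; split_ifs <;> omega
    · intro i j hi hj hij; rw [lamC_def, lamC_def]; split_ifs <;> omega
    · intro t t' ht ht' htt; rw [hsum, hsum]; split_ifs <;> omega
    · rw [h0, hend]; omega
    · intro t ht; rw [hsum, h0]; split_ifs <;> omega
    · intro t ht; rw [hsum, hend]; split_ifs <;> omega
  · -- no collision: lam i = i + 1
    push_neg at hc
    refine ⟨lamN, ?_, ?_, ?_, ?_, ?_, ?_⟩
    · intro i hi; rw [lamN_def]; omega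
    · intro i j hi hj; rw [lamN_def, lamN_def]; omega
    · intro t t' ht ht' htt; simp only [lamN_def]; omega
    · simp only [lamN_def]; omega
    · intro t ht; simp only [lamN_def]
      rcases Nat.even_or_odd (fa + k) with he | ho
      · have h1 : ¬ fa + 2 ≤ k := fun h => absurd (hc he.two_dvd) (by omega)
        omega
      · obtain ⟨c, hc2⟩ := ho; omega
    · intro t ht; simp only [lamN_def]; omega

/-- Symmetric version: only needs `fa ≠ fb`. -/
lemma lam_spec (k fa fb : ℕ) (hk : 1 ≤ k) (hfa : 1 ≤ fa) (hfb : 1 ≤ fb) (hne : fa ≠ fb) :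
    ∃ lam : ℕ → ℕ,
      (∀ i, i < k → 1 ≤ lam i ∧ lam i ≤ k) ∧
      (∀ i j, i < k → j < k → i ≠ j → lam i ≠ lam j) ∧
      (∀ t t', t + 1 < k → t' + 1 < k → t ≠ t' →
        lam t + lam (t+1) ≠ lam t' + lam (t'+1)) ∧
      (fa + lam 0 ≠ fb + lam (k-1)) ∧
      (∀ t, t + 1 < k → fa + k + lam 0 ≠ lam t + lam (t+1)) ∧
      (∀ t, t + 1 < k → fb + k + lam (k-1) ≠ lam t + lam (t+1)) := by
  rcases lt_or_gt_of_ne hne with h | h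
  · exact lam_spec_lt k fa fb hk hfa h
  · obtain ⟨lam, B1, B2, B3, B4, B5, B6⟩ := lam_spec_lt k fb fa hk hfb h
    refine ⟨fun i => lam (k-1-i), ?_, ?_, ?_, ?_, ?_, ?_⟩
    · intro i hi; exact B1 _ (by omega)
    · intro i j hi hj hij; exact B2 _ _ (by omega) (by omega) (by omega)
    · intro t t' ht ht' htt
      have e1 : k - 1 - t = (k - 2 - t) + 1 := by omega
      have e2 : k - 1 - (t+1) = k - 2 - t := by omega
      have e3 : k - 1 - t' = (k - 2 - t') + 1 := by omega
      have e4 : k - 1 - (t'+1) = k - 2 - t' := by omega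
      simp only [e1, e2, e3, e4]
      have := B3 (k-2-t) (k-2-t') (by omega) (by omega) (by omega)
      omega
    · have e1 : k - 1 - 0 = k - 1 := by omega
      have e2 : k - 1 - (k-1) = 0 := by omega
      simp only [e1, e2]
      omega
    · intro t ht
      have e1 : k - 1 - 0 = k - 1 := by omega
      have e2 : k - 1 - t = (k - 2 - t) + 1 := by omega
      have e3 : k - 1 - (t+1) = k - 2 - t := by omega
      simp only [e1, e2, e3]
      have := B6 (k-2-t) (by omega)
      omega
    · intro t ht
      have e1 : k - 1 - (k-1) = 0 := by omega
      have e2 : k - 1 - t = (k - 2 - t) + 1 := by omega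
      have e3 : k - 1 - (t+1) = k - 2 - t := by omega
      simp only [e1, e2, e3]
      have := B5 (k-2-t) (by omega)
      omega



section AuxDev

variable {V : Type*} [Fintype V] [DecidableEq V]

/-- The `i`-th vertex along the new path, `0 ≤ i ≤ k`. -/
private def pvert (a b : V) (k : ℕ) (i : ℕ) : V ⊕ Fin (k-1) :=
  if _h0 : i = 0 then Sum.inl a
  else if h : i < k then Sum.inr ⟨i-1, by omega⟩
  else Sum.inl b

/-- The `i`-th edge along the new path, `0 ≤ i < k`. -/
private def pedge (a b : V) (k : ℕ) (i : ℕ) : Sym2 (V ⊕ Fin (k-1)) :=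
  s(pvert a b k i, pvert a b k (i+1))

private lemma pvert_zero (a b : V) (k : ℕ) : pvert a b k 0 = Sum.inl a := by
  simp [pvert]

private lemma pvert_last (a b : V) (k : ℕ) (hk : 1 ≤ k) : pvert a b k k = Sum.inl b := by
  rw [pvert]
  rw [dif_neg (by omega)]
  rw [dif_neg (by omega)]

private lemma pvert_mid (a b : V) (k : ℕ) (i : ℕ) (h0 : 0 < i) (hik : i < k) :
    pvert a b k i = Sum.inr ⟨i-1, by omega⟩ := by
  rw [pvert, dif_neg (by omega), dif_pos hik]

private lemma pvert_inj (a b : V) (k : ℕ) (hab : a ≠ b) (i j : ℕ)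
    (hi : i ≤ k) (hj : j ≤ k) (h : pvert a b k i = pvert a b k j) : i = j := by
  by_contra hne
  rcases Nat.eq_zero_or_pos i with h0 | h0 <;> rcases Nat.eq_zero_or_pos j with h0' | h0'
  · omega
  · subst h0; rw [pvert_zero] at h
    rcases eq_or_lt_of_le hj with hjk | hjk
    · subst hjk; rw [pvert_last _ _ _ (by omega)] at h; exact hab (Sum.inl.inj h)
    · rw [pvert_mid _ _ _ _ h0' hjk] at h; exact Sum.inl_ne_inr h
  · subst h0'; rw [pvert_zero] at h
    rcases eq_or_lt_of_le hi with hik | hik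
    · subst hik; rw [pvert_last _ _ _ (by omega)] at h; exact hab (Sum.inl.inj h).symm
    · rw [pvert_mid _ _ _ _ h0 hik] at h; exact Sum.inr_ne_inl h
  · rcases eq_or_lt_of_le hi with hik | hik <;> rcases eq_or_lt_of_le hj with hjk | hjk
    · omega
    · subst hik; rw [pvert_last _ _ _ (by omega), pvert_mid _ _ _ _ h0' hjk] at h
      exact Sum.inl_ne_inr h
    · subst hjk; rw [pvert_last _ _ _ (by omega), pvert_mid _ _ _ _ h0 hik] at h
      exact Sum.inr_ne_inl h
    · rw [pvert_mid _ _ _ _ h0 hik, pvert_mid _ _ _ _ h0' hjk] at h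
      have := Sum.inr.inj h
      have : i - 1 = j - 1 := Fin.mk.inj_iff.mp this
      omega

private lemma pedge_inj (a b : V) (k : ℕ) (hab : a ≠ b) (i j : ℕ)
    (hi : i < k) (hj : j < k) (h : pedge a b k i = pedge a b k j) : i = j := by
  rw [pedge, pedge, Sym2.eq_iff] at h
  rcases h with ⟨h1, _⟩ | ⟨h1, h2⟩
  · exact pvert_inj a b k hab i j (by omega) (by omega) h1
  · have e1 := pvert_inj a b k hab i (j+1) (by omega) (by omega) h1
    have e2 := pvert_inj a b k hab (i+1) j (by omega) (by omega) h2
    omega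

end AuxDev

set_option linter.unusedSectionVars false

section AuxDev2

variable {V : Type*} [Fintype V] [DecidableEq V]

private lemma map_inl_isDiag {k : ℕ} (z : Sym2 V) :
    (Sym2.map (Sum.inl : V → V ⊕ Fin (k-1)) z).IsDiag ↔ z.IsDiag := by
  induction z using Sym2.ind with
  | _ x y => simp [Sym2.map_pair_eq, Sym2.mk_isDiag_iff]

private lemma inr_not_mem_map_inl {k : ℕ} (z : Sym2 V) (t : Fin (k-1)) :
    (Sum.inr t : V ⊕ Fin (k-1)) ∉ Sym2.map Sum.inl z := by
  rw [Sym2.mem_map]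
  rintro ⟨x, -, h⟩
  exact Sum.inl_ne_inr h

private lemma edges_addPath (G : SimpleGraph V) (a b : V) (k : ℕ) (hk : 1 ≤ k) (hab : a ≠ b) :
    edges (addPath G a b k) =
      (edges G).image (Sym2.map Sum.inl) ∪ (range k).image (pedge a b k) := by
  ext e
  simp only [edges, mem_filter, mem_univ, true_and, addPath,
    SimpleGraph.edgeSet_fromEdgeSet, Set.mem_diff, Set.mem_setOf_eq,
    Set.mem_union, Set.mem_image, mem_union, mem_image, mem_range]
  constructor
  · rintro ⟨((((⟨e', he', rfl⟩ | ⟨i, j, hij, rfl⟩) | ⟨i, hi0, rfl⟩) | ⟨i, hik, rfl⟩) | hE), hd⟩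
    · exact Or.inl ⟨e', by simpa [edges] using he', rfl⟩
    · have hi2 : (i : ℕ) < k - 1 := i.2
      have hj2 : (j : ℕ) < k - 1 := j.2
      refine Or.inr ⟨(i : ℕ) + 1, by omega, ?_⟩
      have h1 : pvert a b k ((i:ℕ)+1) = Sum.inr i := by
        rw [pvert_mid a b k _ (by omega) (by omega)]
        exact congrArg Sum.inr (Fin.ext (by simp only [Fin.val_mk]; omega))
      have h2 : pvert a b k ((i:ℕ)+1+1) = Sum.inr j := by
        rw [pvert_mid a b k _ (by omega) (by omega)]
        exact congrArg Sum.inr (Fin.ext (by simp only [Fin.val_mk]; omega))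
      rw [pedge, h1, h2]
    · have hi2 : (i : ℕ) < k - 1 := i.2
      refine Or.inr ⟨0, by omega, ?_⟩
      have h1 : pvert a b k (0+1) = Sum.inr i := by
        rw [pvert_mid a b k _ (by omega) (by omega)]
        exact congrArg Sum.inr (Fin.ext (by simp only [Fin.val_mk]; omega))
      rw [pedge, h1, pvert_zero]
    · have hi2 : (i : ℕ) < k - 1 := i.2
      refine Or.inr ⟨k - 1, by omega, ?_⟩
      have h1 : pvert a b k (k-1) = Sum.inr i := by
        rw [pvert_mid a b k _ (by omega) (by omega)]
        exact congrArg Sum.inr (Fin.ext (by simp only [Fin.val_mk]; omega))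
      rw [pedge, h1, show k - 1 + 1 = k by omega, pvert_last a b k hk, Sym2.eq_swap]
    · split at hE
      · refine Or.inr ⟨0, by omega, ?_⟩
        rename_i hk1
        rw [Set.mem_singleton_iff] at hE
        rw [pedge, pvert_zero, show (0:ℕ)+1 = k by omega, pvert_last a b k hk, hE]
      · simp at hE
  · rintro (⟨e', he', rfl⟩ | ⟨i, hik, rfl⟩)
    · have he'' : e' ∈ G.edgeSet := by simpa [edges] using he'
      refine ⟨Or.inl (Or.inl (Or.inl (Or.inl ⟨e', he'', rfl⟩))), ?_⟩
      rw [Sym2.mem_diagSet, map_inl_isDiag]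
      exact G.not_isDiag_of_mem_edgeSet he''
    · constructor
      · -- membership in the big union
        rcases Nat.eq_zero_or_pos i with rfl | hi0
        · rcases eq_or_lt_of_le hk with hk1 | hk2
          · refine Or.inr ?_
            rw [if_pos hk1.symm, Set.mem_singleton_iff, pedge, pvert_zero,
              show (0:ℕ)+1 = k by omega, pvert_last a b k hk]
          · refine Or.inl (Or.inl (Or.inr ⟨⟨0, by omega⟩, rfl, ?_⟩))
            rw [pedge, pvert_zero, pvert_mid a b k 1 (by omega) (by omega)]
        · rcases eq_or_lt_of_le (show i + 1 ≤ k by omega) with hik1 | hik1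
          · refine Or.inl (Or.inr ⟨⟨i - 1, by omega⟩, by simp; omega, ?_⟩)
            have hp : pvert a b k (i+1) = Sum.inl b := by
              rw [hik1, pvert_last a b k hk]
            rw [pedge, pvert_mid a b k i hi0 hik, hp, Sym2.eq_swap]
          · refine Or.inl (Or.inl (Or.inl (Or.inr
              ⟨⟨i - 1, by omega⟩, ⟨i, by omega⟩, by simp; omega, ?_⟩)))
            have h1 : pvert a b k i = (Sum.inr ⟨i-1, by omega⟩ : V ⊕ Fin (k-1)) :=
              pvert_mid a b k i hi0 hik
            have h2 : pvert a b k (i+1) = (Sum.inr ⟨i, by omega⟩ : V ⊕ Fin (k-1)) := by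
              rw [pvert_mid a b k (i+1) (by omega) hik1]
              exact congrArg Sum.inr (Fin.ext (by simp only [Fin.val_mk]; omega))
            rw [pedge, h1, h2]
      · -- non-diagonal
        rw [pedge, Sym2.mem_diagSet, Sym2.mk_isDiag_iff]
        intro h
        have := pvert_inj a b k hab i (i+1) (by omega) (by omega) h
        omega

end AuxDev2

section AuxDev3

variable {V : Type*} [Fintype V] [DecidableEq V]

private lemma pedge_not_old (G : SimpleGraph V) (a b : V) (k : ℕ) (hk : 1 ≤ k) (hab : a ≠ b)
    (hnab : s(a,b) ∉ edges G) (i : ℕ) (hik : i < k) (e' : Sym2 V) (he' : e' ∈ edges G) :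
    pedge a b k i ≠ Sym2.map Sum.inl e' := by
  intro h
  rcases eq_or_lt_of_le hk with hk1 | hk2
  · -- k = 1, i = 0, pedge = s(inl a, inl b)
    have hi : i = 0 := by omega
    subst hi
    rw [pedge, pvert_zero, show (0:ℕ)+1 = k by omega, pvert_last a b k hk] at h
    have heq : e' = s(a, b) := by
      induction e' using Sym2.ind with
      | _ x y =>
        rw [Sym2.map_pair_eq, Sym2.eq_iff] at h
        rw [Sym2.eq_iff]
        rcases h with ⟨h1, h2⟩ | ⟨h1, h2⟩
        · exact Or.inl ⟨(Sum.inl.inj h1).symm, (Sum.inl.inj h2).symm⟩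
        · exact Or.inr ⟨(Sum.inl.inj h2).symm, (Sum.inl.inj h1).symm⟩
    exact hnab (heq ▸ he')
  · -- k ≥ 2 : pedge contains an inr vertex
    have hex : ∃ t : Fin (k-1), (Sum.inr t : V ⊕ Fin (k-1)) ∈ pedge a b k i := by
      rcases Nat.eq_zero_or_pos i with rfl | hi0
      · refine ⟨⟨0, by omega⟩, ?_⟩
        rw [pedge, pvert_mid a b k (0+1) (by omega) (by omega), Sym2.mem_iff]
        right
        exact congrArg Sum.inr (Fin.ext (by simp only [Fin.val_mk]))
      · refine ⟨⟨i-1, by omega⟩, ?_⟩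
        rw [pedge, pvert_mid a b k i hi0 hik, Sym2.mem_iff]
        left
        rfl
    obtain ⟨t, ht⟩ := hex
    rw [h] at ht
    exact inr_not_mem_map_inl e' t ht

end AuxDev3

section AuxDev4

variable {V : Type*} [Fintype V] [DecidableEq V]

private lemma pvert_inl (a b : V) (k : ℕ) (hk : 1 ≤ k) (j : ℕ) (hj : j ≤ k) (v : V)
    (h : pvert a b k j = Sum.inl v) : v = a ∨ v = b := by
  rcases Nat.eq_zero_or_pos j with rfl | h0
  · rw [pvert_zero] at h
    exact Or.inl (Sum.inl.inj h).symm
  rcases eq_or_lt_of_le hj with rfl | hjk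
  · rw [pvert_last a b j (by omega)] at h
    exact Or.inr (Sum.inl.inj h).symm
  · rw [pvert_mid a b k j h0 hjk] at h
    exact absurd h Sum.inr_ne_inl

private lemma disjoint_old_path (G : SimpleGraph V) (a b : V) (k : ℕ) (hk : 1 ≤ k)
    (hab : a ≠ b) (hnab : s(a,b) ∉ edges G) :
    Disjoint ((edges G).image (Sym2.map (Sum.inl : V → V ⊕ Fin (k-1))))
      ((range k).image (pedge a b k)) := by
  rw [disjoint_left]
  rintro e he hp
  simp only [mem_image, mem_range] at he hp
  obtain ⟨e', he', rfl⟩ := he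
  obtain ⟨i, hik, heq⟩ := hp
  exact pedge_not_old G a b k hk hab hnab i hik e' he' heq

private lemma filter_old_inl (G : SimpleGraph V) (k : ℕ) (v : V) :
    (((edges G).image (Sym2.map (Sum.inl : V → V ⊕ Fin (k-1)))).filter
      (fun e => Sum.inl v ∈ e)) =
    ((edges G).filter (fun e => v ∈ e)).image (Sym2.map Sum.inl) := by
  ext e
  simp only [mem_filter, mem_image]
  constructor
  · rintro ⟨⟨e', he', rfl⟩, hv⟩
    refine ⟨e', ⟨he', ?_⟩, rfl⟩
    rw [Sym2.mem_map] at hv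
    obtain ⟨x, hx, hxe⟩ := hv
    obtain rfl := Sum.inl.inj hxe
    exact hx
  · rintro ⟨e', ⟨he', hv⟩, rfl⟩
    exact ⟨⟨e', he', rfl⟩, Sym2.mem_map.mpr ⟨v, hv, rfl⟩⟩

private lemma filter_old_inr (G : SimpleGraph V) (k : ℕ) (t : Fin (k-1)) :
    (((edges G).image (Sym2.map (Sum.inl : V → V ⊕ Fin (k-1)))).filter
      (fun e => Sum.inr t ∈ e)) = ∅ := by
  rw [filter_eq_empty_iff]
  intro e he
  simp only [mem_image] at he
  obtain ⟨e', -, rfl⟩ := he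
  exact inr_not_mem_map_inl e' t

private lemma filter_path_a (a b : V) (k : ℕ) (hk : 1 ≤ k) (hab : a ≠ b) :
    (((range k).image (pedge a b k)).filter (fun e => Sum.inl a ∈ e)) =
      {pedge a b k 0} := by
  ext e
  simp only [mem_filter, mem_image, mem_range, mem_singleton]
  constructor
  · rintro ⟨⟨i, hik, rfl⟩, hv⟩
    rw [pedge, Sym2.mem_iff] at hv
    rcases hv with h | h
    · have h0 : (0:ℕ) = i := by
        refine pvert_inj a b k hab 0 i (by omega) (by omega) ?_
        rw [pvert_zero, h]
      rw [← h0]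
    · have h0 : (0:ℕ) = i + 1 := by
        refine pvert_inj a b k hab 0 (i+1) (by omega) (by omega) ?_
        rw [pvert_zero, h]
      omega
  · rintro rfl
    refine ⟨⟨0, by omega, rfl⟩, ?_⟩
    rw [pedge, Sym2.mem_iff]
    left
    rw [pvert_zero]

private lemma filter_path_b (a b : V) (k : ℕ) (hk : 1 ≤ k) (hab : a ≠ b) :
    (((range k).image (pedge a b k)).filter (fun e => Sum.inl b ∈ e)) =
      {pedge a b k (k-1)} := by
  ext e
  simp only [mem_filter, mem_image, mem_range, mem_singleton]
  constructor
  · rintro ⟨⟨i, hik, rfl⟩, hv⟩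
    rw [pedge, Sym2.mem_iff] at hv
    rcases hv with h | h
    · have h0 : k = i := by
        refine pvert_inj a b k hab k i (by omega) (by omega) ?_
        rw [pvert_last a b k hk, h]
      omega
    · have h0 : k = i + 1 := by
        refine pvert_inj a b k hab k (i+1) (by omega) (by omega) ?_
        rw [pvert_last a b k hk, h]
      have : i = k - 1 := by omega
      rw [this]
  · rintro rfl
    refine ⟨⟨k-1, by omega, rfl⟩, ?_⟩
    rw [pedge, Sym2.mem_iff]
    right
    rw [show k - 1 + 1 = k by omega, pvert_last a b k hk]

private lemma filter_path_other (a b : V) (k : ℕ) (hk : 1 ≤ k) (hab : a ≠ b)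
    (v : V) (hva : v ≠ a) (hvb : v ≠ b) :
    (((range k).image (pedge a b k)).filter (fun e => Sum.inl v ∈ e)) = ∅ := by
  rw [filter_eq_empty_iff]
  intro e he
  simp only [mem_image, mem_range] at he
  obtain ⟨i, hik, rfl⟩ := he
  rw [pedge, Sym2.mem_iff]
  push_neg
  constructor
  · intro h
    rcases pvert_inl a b k hk i (by omega) v h.symm with h' | h' <;> [exact hva h'; exact hvb h']
  · intro h
    rcases pvert_inl a b k hk (i+1) (by omega) v h.symm with h' | h' <;> [exact hva h'; exact hvb h']

private lemma pvert_inr (a b : V) (k : ℕ) (hab : a ≠ b) (t : Fin (k-1)) :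
    pvert a b k ((t:ℕ)+1) = Sum.inr t := by
  have ht : (t:ℕ) < k - 1 := t.2
  rw [pvert_mid a b k ((t:ℕ)+1) (by omega) (by omega)]
  exact congrArg Sum.inr (Fin.ext (by simp only [Fin.val_mk]; omega))

private lemma filter_path_inr (a b : V) (k : ℕ) (hk : 1 ≤ k) (hab : a ≠ b) (t : Fin (k-1)) :
    (((range k).image (pedge a b k)).filter (fun e => Sum.inr t ∈ e)) =
      {pedge a b k (t:ℕ), pedge a b k ((t:ℕ)+1)} := by
  have ht : (t:ℕ) < k - 1 := t.2
  ext e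
  simp only [mem_filter, mem_image, mem_range, mem_insert, mem_singleton]
  constructor
  · rintro ⟨⟨i, hik, rfl⟩, hv⟩
    rw [pedge, Sym2.mem_iff] at hv
    rcases hv with h | h
    · have h0 : (t:ℕ) + 1 = i := by
        refine pvert_inj a b k hab ((t:ℕ)+1) i (by omega) (by omega) ?_
        rw [pvert_inr a b k hab, h]
      right
      rw [← h0]
    · have h0 : (t:ℕ) + 1 = i + 1 := by
        refine pvert_inj a b k hab ((t:ℕ)+1) (i+1) (by omega) (by omega) ?_
        rw [pvert_inr a b k hab, h]
      left
      rw [show i = (t:ℕ) by omega]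
  · rintro (rfl | rfl)
    · refine ⟨⟨(t:ℕ), by omega, rfl⟩, ?_⟩
      rw [pedge, Sym2.mem_iff]
      right
      rw [pvert_inr a b k hab]
    · refine ⟨⟨(t:ℕ)+1, by omega, rfl⟩, ?_⟩
      rw [pedge, Sym2.mem_iff]
      left
      rw [pvert_inr a b k hab]

/-- The new labeling. -/
private def glab (G : SimpleGraph V) (a b : V) (k : ℕ) (f : Sym2 V → ℕ) (lam : ℕ → ℕ) :
    Sym2 (V ⊕ Fin (k-1)) → ℕ := fun e =>
  if h : ∃ e', e' ∈ edges G ∧ e = Sym2.map Sum.inl e' then f h.choose + k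
  else if h2 : ∃ i, i < k ∧ e = pedge a b k i then lam h2.choose else 0

private lemma glab_old (G : SimpleGraph V) (a b : V) (k : ℕ) (f : Sym2 V → ℕ) (lam : ℕ → ℕ)
    (e' : Sym2 V) (he' : e' ∈ edges G) :
    glab G a b k f lam (Sym2.map Sum.inl e') = f e' + k := by
  have h : ∃ x, x ∈ edges G ∧ Sym2.map (Sum.inl : V → V ⊕ Fin (k-1)) e' = Sym2.map Sum.inl x :=
    ⟨e', he', rfl⟩
  rw [glab, dif_pos h]
  have hspec := h.choose_spec
  have : e' = h.choose := Sym2.map.injective Sum.inl_injective hspec.2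
  rw [← this]

private lemma glab_path (G : SimpleGraph V) (a b : V) (k : ℕ) (f : Sym2 V → ℕ) (lam : ℕ → ℕ)
    (hk : 1 ≤ k) (hab : a ≠ b) (hnab : s(a,b) ∉ edges G) (i : ℕ) (hik : i < k) :
    glab G a b k f lam (pedge a b k i) = lam i := by
  have hno : ¬ ∃ e', e' ∈ edges G ∧ pedge a b k i = Sym2.map Sum.inl e' := by
    rintro ⟨e', he', heq⟩
    exact pedge_not_old G a b k hk hab hnab i hik e' he' heq
  have h2 : ∃ j, j < k ∧ pedge a b k i = pedge a b k j := ⟨i, hik, rfl⟩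
  rw [glab, dif_neg hno, dif_pos h2]
  have hspec := h2.choose_spec
  have : i = h2.choose := pedge_inj a b k hab i h2.choose hik hspec.1 hspec.2
  rw [← this]

end AuxDev4

/-- if `G` is strongly antimagic with exactly two leaves `a` and `b`,
then adding a new `a`-`b` path of any length `k ≥ 1` keeps it strongly antimagic. -/
theorem stmt_5 (G : SimpleGraph V) (a b : V) (hab : a ≠ b)
    (ha : deg G a = 1) (hb : deg G b = 1)
    (honly : ∀ w : V, deg G w = 1 → w = a ∨ w = b)
    (hG : IsStronglyAntimagic G)
    (k : ℕ) (hk : 1 ≤ k) :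
    IsStronglyAntimagic (addPath G a b k) := by
  classical
  obtain ⟨f, hbijG, hdistG, hmonoG⟩ := hG
  set m := (edges G).card with hm
  have ha' : ((edges G).filter (fun e => a ∈ e)).card = 1 := ha
  have hb' : ((edges G).filter (fun e => b ∈ e)).card = 1 := hb
  obtain ⟨ea, hea⟩ := card_eq_one.mp ha'
  obtain ⟨eb, heb⟩ := card_eq_one.mp hb'
  have hea_mem : ea ∈ edges G := (mem_filter.mp (hea ▸ mem_singleton_self ea)).1
  have heb_mem : eb ∈ edges G := (mem_filter.mp (heb ▸ mem_singleton_self eb)).1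
  have hphia : phi G f a = f ea := by rw [phi, hea, sum_singleton]
  have hphib : phi G f b = f eb := by rw [phi, heb, sum_singleton]
  have hfa1 : 1 ≤ f ea := (hbijG.1 hea_mem).1
  have hfam : f ea ≤ m := (hbijG.1 hea_mem).2
  have hfb1 : 1 ≤ f eb := (hbijG.1 heb_mem).1
  have hfbm : f eb ≤ m := (hbijG.1 heb_mem).2
  have hfab : f ea ≠ f eb := by
    have h := hdistG a b hab
    rw [hphia, hphib] at h
    exact h
  have hnab : s(a,b) ∉ edges G := by
    intro hmem
    have h1 : s(a,b) ∈ (edges G).filter (fun e => a ∈ e) :=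
      mem_filter.mpr ⟨hmem, Sym2.mem_iff.mpr (Or.inl rfl)⟩
    have h2 : s(a,b) ∈ (edges G).filter (fun e => b ∈ e) :=
      mem_filter.mpr ⟨hmem, Sym2.mem_iff.mpr (Or.inr rfl)⟩
    rw [hea, mem_singleton] at h1
    rw [heb, mem_singleton] at h2
    exact hfab (by rw [← h1, ← h2])
  obtain ⟨lam, hl1, hl2, hl3, hl4, hl5, hl6⟩ := lam_spec k (f ea) (f eb) hk hfa1 hfb1 hfab
  set H := addPath G a b k with hH
  set g := glab G a b k f lam with hg
  have hE : edges H = (edges G).image (Sym2.map Sum.inl) ∪ (range k).image (pedge a b k) :=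
    edges_addPath G a b k hk hab
  have hdisj := disjoint_old_path G a b k hk hab hnab
  have hinj2 : Function.Injective (Sym2.map (Sum.inl : V → V ⊕ Fin (k-1))) :=
    Sym2.map.injective Sum.inl_injective
  have hpinj : Set.InjOn (pedge a b k) (range k) := by
    intro i hi j hj hij
    exact pedge_inj a b k hab i j (mem_range.mp hi) (mem_range.mp hj) hij
  have hcard : (edges H).card = m + k := by
    rw [hE, card_union_of_disjoint hdisj, card_image_of_injective _ hinj2,
      card_image_of_injOn hpinj, card_range]
  have hdeg_inl : ∀ v : V, deg H (Sum.inl v) =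
      deg G v + (if v = a then 1 else if v = b then 1 else 0) := by
    intro v
    rw [deg, hE, filter_union, card_union_of_disjoint (hdisj.mono (filter_subset _ _) (filter_subset _ _)),
      filter_old_inl, card_image_of_injective _ hinj2]
    congr 1
    by_cases hva : v = a
    · rw [hva, filter_path_a a b k hk hab, card_singleton, if_pos rfl]
    by_cases hvb : v = b
    · rw [hvb, filter_path_b a b k hk hab, card_singleton, if_neg (hvb ▸ hva), if_pos rfl]
    · rw [filter_path_other a b k hk hab v hva hvb, card_empty, if_neg hva, if_neg hvb]
  have hdeg_inr : ∀ t : Fin (k-1), deg H (Sum.inr t) = 2 := by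
    intro t
    have ht : (t:ℕ) < k - 1 := t.2
    have hne : pedge a b k (t:ℕ) ≠ pedge a b k ((t:ℕ)+1) := by
      intro h
      have := pedge_inj a b k hab (t:ℕ) ((t:ℕ)+1) (by omega) (by omega) h
      omega
    rw [deg, hE, filter_union, card_union_of_disjoint (hdisj.mono (filter_subset _ _) (filter_subset _ _)),
      filter_old_inr, card_empty, filter_path_inr a b k hk hab t, card_pair hne]
  have hsum_old : ∀ v : V,
      (∑ e ∈ ((edges G).filter (fun e => v ∈ e)).image
        (Sym2.map (Sum.inl : V → V ⊕ Fin (k-1))), g e) = phi G f v + k * deg G v := by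
    intro v
    rw [sum_image (fun x _ y _ h => hinj2 h)]
    rw [sum_congr rfl (fun e' he' => glab_old G a b k f lam e' (mem_filter.mp he').1)]
    rw [sum_add_distrib, sum_const, smul_eq_mul, phi, deg]
    ring
  have hphi_inl : ∀ v : V, phi H g (Sum.inl v) = phi G f v + k * deg G v +
      (if v = a then lam 0 else if v = b then lam (k-1) else 0) := by
    intro v
    rw [phi, hE, filter_union, sum_union (hdisj.mono (filter_subset _ _) (filter_subset _ _)), filter_old_inl, hsum_old]
    congr 1
    by_cases hva : v = a
    · rw [hva, filter_path_a a b k hk hab, sum_singleton, if_pos rfl]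
      exact glab_path G a b k f lam hk hab hnab 0 (by omega)
    by_cases hvb : v = b
    · rw [hvb, filter_path_b a b k hk hab, sum_singleton, if_neg (hvb ▸ hva), if_pos rfl]
      exact glab_path G a b k f lam hk hab hnab (k-1) (by omega)
    · rw [filter_path_other a b k hk hab v hva hvb, sum_empty, if_neg hva, if_neg hvb]
  have hphi_inr : ∀ t : Fin (k-1), phi H g (Sum.inr t) = lam (t:ℕ) + lam ((t:ℕ)+1) := by
    intro t
    have ht : (t:ℕ) < k - 1 := t.2
    have hne : pedge a b k (t:ℕ) ≠ pedge a b k ((t:ℕ)+1) := by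
      intro h
      have := pedge_inj a b k hab (t:ℕ) ((t:ℕ)+1) (by omega) (by omega) h
      omega
    have hg1 : g (pedge a b k (t:ℕ)) = lam (t:ℕ) :=
      glab_path G a b k f lam hk hab hnab (t:ℕ) (by omega)
    have hg2 : g (pedge a b k ((t:ℕ)+1)) = lam ((t:ℕ)+1) :=
      glab_path G a b k f lam hk hab hnab ((t:ℕ)+1) (by omega)
    rw [phi, hE, filter_union, sum_union (hdisj.mono (filter_subset _ _) (filter_subset _ _)), filter_old_inr, sum_empty,
      filter_path_inr a b k hk hab t, sum_pair hne, hg1, hg2, zero_add]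
  -- facts about G
  have hdegother : ∀ v : V, v ≠ a → v ≠ b → deg G v = 0 ∨ 2 ≤ deg G v := by
    intro v hva hvb
    have h1 : deg G v ≠ 1 := by
      intro h1
      rcases honly v h1 with rfl | rfl
      · exact hva rfl
      · exact hvb rfl
    omega
  have hphi0 : ∀ v : V, deg G v = 0 → phi G f v = 0 := by
    intro v hv
    have hv' : ((edges G).filter (fun e => v ∈ e)).card = 0 := hv
    rw [phi, card_eq_zero.mp hv', sum_empty]
  have hphi_gt : ∀ v : V, 2 ≤ deg G v → f ea < phi G f v ∧ f eb < phi G f v := by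
    intro v hv
    constructor
    · have h := hmonoG v a (by omega)
      rwa [hphia] at h
    · have h := hmonoG v b (by omega)
      rwa [hphib] at h
  -- lam bounds
  have hlam0 : 1 ≤ lam 0 ∧ lam 0 ≤ k := hl1 0 (by omega)
  have hlamk : 1 ≤ lam (k-1) ∧ lam (k-1) ≤ k := hl1 (k-1) (by omega)
  have hst : ∀ t : Fin (k-1), 1 ≤ lam (t:ℕ) ∧ lam (t:ℕ) ≤ k ∧ 1 ≤ lam ((t:ℕ)+1) ∧
      lam ((t:ℕ)+1) ≤ k ∧ lam (t:ℕ) + lam ((t:ℕ)+1) ≤ 2*k - 1 := by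
    intro t
    have ht : (t:ℕ) < k - 1 := t.2
    have h1 := hl1 (t:ℕ) (by omega)
    have h2 := hl1 ((t:ℕ)+1) (by omega)
    have h3 := hl2 (t:ℕ) ((t:ℕ)+1) (by omega) (by omega) (by omega)
    exact ⟨h1.1, h1.2, h2.1, h2.2, by omega⟩
  -- key comparisons
  have hmul : ∀ v : V, 2 ≤ deg G v → 2 * k ≤ k * deg G v := by
    intro v hv
    calc 2 * k = k * 2 := by ring
    _ ≤ k * deg G v := Nat.mul_le_mul_left k hv
  have hpa : phi H g (Sum.inl a) = f ea + k * 1 + lam 0 := by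
    rw [hphi_inl a, if_pos rfl, hphia, ha]
  have hpb : phi H g (Sum.inl b) = f eb + k * 1 + lam (k-1) := by
    rw [hphi_inl b, if_neg (fun h => hab h.symm), if_pos rfl, hphib, hb]
  have hpo : ∀ v : V, v ≠ a → v ≠ b → phi H g (Sum.inl v) = phi G f v + k * deg G v := by
    intro v hva hvb
    rw [hphi_inl v, if_neg hva, if_neg hvb, add_zero]
  have keyA : ∀ v : V, v ≠ a → v ≠ b → 2 ≤ deg G v →
      phi H g (Sum.inl a) < phi H g (Sum.inl v) ∧
      phi H g (Sum.inl b) < phi H g (Sum.inl v) := by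
    intro v hva hvb hv
    have hgt := hphi_gt v hv
    have h2k := hmul v hv
    rw [hpa, hpb, hpo v hva hvb]
    constructor <;> omega
  have keyT : ∀ (t : Fin (k-1)) (v : V), v ≠ a → v ≠ b → 2 ≤ deg G v →
      phi H g (Sum.inr t) < phi H g (Sum.inl v) := by
    intro t v hva hvb hv
    have hgt := hphi_gt v hv
    have h2k := hmul v hv
    have hs := hst t
    rw [hphi_inr t, hpo v hva hvb]
    omega
  have key0 : ∀ v : V, deg G v = 0 → phi H g (Sum.inl v) = 0 := by
    intro v hv
    have hva : v ≠ a := by intro h; rw [h, ha] at hv; omega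
    have hvb : v ≠ b := by intro h; rw [h, hb] at hv; omega
    rw [hpo v hva hvb, hphi0 v hv, hv]
    omega
  have keyPosA : 0 < phi H g (Sum.inl a) := by rw [hpa]; omega
  have keyPosB : 0 < phi H g (Sum.inl b) := by rw [hpb]; omega
  have keyPosT : ∀ t : Fin (k-1), 0 < phi H g (Sum.inr t) := by
    intro t
    have hs := hst t
    rw [hphi_inr t]
    omega
  have keyPosO : ∀ v : V, 2 ≤ deg G v → 0 < phi H g (Sum.inl v) := by
    intro v hv
    have hgt := hphi_gt v hv
    have h2k := hmul v hv
    by_cases hva : v = a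
    · rw [hva]; exact keyPosA
    by_cases hvb : v = b
    · rw [hvb]; exact keyPosB
    rw [hpo v hva hvb]
    omega
  have keyAB : phi H g (Sum.inl a) ≠ phi H g (Sum.inl b) := by
    rw [hpa, hpb]
    omega
  have keyAT : ∀ t : Fin (k-1), phi H g (Sum.inl a) ≠ phi H g (Sum.inr t) := by
    intro t
    have ht : (t:ℕ) < k - 1 := t.2
    have h := hl5 (t:ℕ) (by omega)
    rw [hpa, hphi_inr t]
    omega
  have keyBT : ∀ t : Fin (k-1), phi H g (Sum.inl b) ≠ phi H g (Sum.inr t) := by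
    intro t
    have ht : (t:ℕ) < k - 1 := t.2
    have h := hl6 (t:ℕ) (by omega)
    rw [hpb, hphi_inr t]
    omega
  have keyTT : ∀ t t' : Fin (k-1), t ≠ t' → phi H g (Sum.inr t) ≠ phi H g (Sum.inr t') := by
    intro t t' htt
    have ht : (t:ℕ) < k - 1 := t.2
    have ht' : (t':ℕ) < k - 1 := t'.2
    have hne : (t:ℕ) ≠ (t':ℕ) := fun h => htt (Fin.ext h)
    have h := hl3 (t:ℕ) (t':ℕ) (by omega) (by omega) hne
    rw [hphi_inr t, hphi_inr t']
    omega
  have keyOldMono : ∀ u v : V, u ≠ a → u ≠ b → v ≠ a → v ≠ b → deg G v < deg G u →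
      phi H g (Sum.inl v) < phi H g (Sum.inl u) := by
    intro u v hua hub hva hvb hlt
    have h1 := hmonoG u v hlt
    have h2 : k * deg G v ≤ k * deg G u := Nat.mul_le_mul_left k (le_of_lt hlt)
    rw [hpo u hua hub, hpo v hva hvb]
    omega
  have keyOld : ∀ u v : V, u ≠ a → u ≠ b → v ≠ a → v ≠ b → u ≠ v →
      phi H g (Sum.inl u) ≠ phi H g (Sum.inl v) := by
    intro u v hua hub hva hvb huv
    rcases lt_trichotomy (deg G u) (deg G v) with h | h | h
    · exact (keyOldMono v u hva hvb hua hub h).ne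
    · have h1 := hdistG u v huv
      rw [hpo u hua hub, hpo v hva hvb, h]
      omega
    · exact (keyOldMono u v hua hub hva hvb h).ne'
  refine ⟨g, ?_, ?_, ?_⟩
  · -- bijectivity
    rw [hcard]
    have hlam_surj : ∀ y, 1 ≤ y → y ≤ k → ∃ i, i < k ∧ lam i = y := by
      intro y h1 h2
      have hsub : (range k).image lam ⊆ Icc 1 k := by
        intro z hz
        obtain ⟨i, hi, rfl⟩ := mem_image.mp hz
        exact mem_Icc.mpr (hl1 i (mem_range.mp hi))
      have hinjlam : Set.InjOn lam (range k) := by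
        intro i hi j hj hij
        by_contra hne
        exact hl2 i j (mem_range.mp hi) (mem_range.mp hj) hne hij
      have hcard' : (Icc 1 k).card ≤ ((range k).image lam).card := by
        rw [card_image_of_injOn hinjlam, card_range, Nat.card_Icc]
        omega
      have heq : (range k).image lam = Icc 1 k :=
        Finset.eq_of_subset_of_card_le hsub hcard'
      have hy : y ∈ (range k).image lam := by
        rw [heq]
        exact mem_Icc.mpr ⟨h1, h2⟩
      obtain ⟨i, hi, hlam⟩ := mem_image.mp hy
      exact ⟨i, mem_range.mp hi, hlam⟩
    refine ⟨?_, ?_, ?_⟩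
    · -- MapsTo
      intro e he
      have he' : e ∈ (edges G).image (Sym2.map Sum.inl) ∪ (range k).image (pedge a b k) := by
        rw [← hE]
        exact he
      rw [mem_union] at he'
      rcases he' with hold | hpath
      · obtain ⟨e', hmem, rfl⟩ := mem_image.mp hold
        rw [hg, glab_old G a b k f lam e' hmem]
        have := hbijG.1 hmem
        rw [Set.mem_Icc] at this ⊢
        omega
      · obtain ⟨i, hi, rfl⟩ := mem_image.mp hpath
        rw [hg, glab_path G a b k f lam hk hab hnab i (mem_range.mp hi)]
        have := hl1 i (mem_range.mp hi)
        rw [Set.mem_Icc]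
        omega
    · -- InjOn
      intro e1 h1 e2 h2 heq
      have h1' : e1 ∈ (edges G).image (Sym2.map Sum.inl) ∪ (range k).image (pedge a b k) := by
        rw [← hE]; exact h1
      have h2' : e2 ∈ (edges G).image (Sym2.map Sum.inl) ∪ (range k).image (pedge a b k) := by
        rw [← hE]; exact h2
      rw [mem_union] at h1' h2'
      rcases h1' with ho1 | hp1 <;> rcases h2' with ho2 | hp2
      · obtain ⟨e1', hm1, rfl⟩ := mem_image.mp ho1
        obtain ⟨e2', hm2, rfl⟩ := mem_image.mp ho2
        rw [hg, glab_old G a b k f lam e1' hm1, glab_old G a b k f lam e2' hm2] at heq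
        have : f e1' = f e2' := by omega
        rw [hbijG.2.1 hm1 hm2 this]
      · obtain ⟨e1', hm1, rfl⟩ := mem_image.mp ho1
        obtain ⟨i, hi, rfl⟩ := mem_image.mp hp2
        rw [hg, glab_old G a b k f lam e1' hm1,
          glab_path G a b k f lam hk hab hnab i (mem_range.mp hi)] at heq
        have hb1 := (hbijG.1 hm1).1
        have hb2 := (hl1 i (mem_range.mp hi)).2
        omega
      · obtain ⟨e2', hm2, rfl⟩ := mem_image.mp ho2
        obtain ⟨i, hi, rfl⟩ := mem_image.mp hp1
        rw [hg, glab_old G a b k f lam e2' hm2,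
          glab_path G a b k f lam hk hab hnab i (mem_range.mp hi)] at heq
        have hb1 := (hbijG.1 hm2).1
        have hb2 := (hl1 i (mem_range.mp hi)).2
        omega
      · obtain ⟨i, hi, rfl⟩ := mem_image.mp hp1
        obtain ⟨j, hj, rfl⟩ := mem_image.mp hp2
        rw [hg, glab_path G a b k f lam hk hab hnab i (mem_range.mp hi),
          glab_path G a b k f lam hk hab hnab j (mem_range.mp hj)] at heq
        have : i = j := by
          by_contra hne
          exact hl2 i j (mem_range.mp hi) (mem_range.mp hj) hne heq
        rw [this]
    · -- SurjOn
      intro y hy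
      rw [Set.mem_Icc] at hy
      rcases le_or_gt y k with hyk | hyk
      · obtain ⟨i, hik, hlam⟩ := hlam_surj y hy.1 hyk
        refine (Set.mem_image _ _ _).mpr ⟨pedge a b k i, ?_, ?_⟩
        · rw [mem_coe, hE, mem_union]
          exact Or.inr (mem_image.mpr ⟨i, mem_range.mpr hik, rfl⟩)
        · rw [hg, glab_path G a b k f lam hk hab hnab i hik, hlam]
      · have hys : y - k ∈ Set.Icc 1 m := Set.mem_Icc.mpr ⟨by omega, by omega⟩
        obtain ⟨e', hmem, hfe⟩ := hbijG.2.2 hys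
        rw [mem_coe] at hmem
        refine (Set.mem_image _ _ _).mpr ⟨Sym2.map Sum.inl e', ?_, ?_⟩
        · rw [mem_coe, hE, mem_union]
          exact Or.inl (mem_image.mpr ⟨e', hmem, rfl⟩)
        · rw [hg, glab_old G a b k f lam e' hmem, hfe]
          omega
  · -- distinct vertex sums
    rintro (u | t) (v | t') huv
    · have huv' : u ≠ v := fun h => huv (congrArg Sum.inl h)
      by_cases hua : u = a
      · rw [hua]
        by_cases hvb : v = b
        · rw [hvb]; exact keyAB
        by_cases hva : v = a
        · exact absurd (hua.trans hva.symm) huv'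
        · rcases hdegother v hva hvb with h0 | h2
          · rw [key0 v h0]; exact keyPosA.ne'
          · exact (keyA v hva hvb h2).1.ne
      by_cases hub : u = b
      · rw [hub]
        by_cases hva : v = a
        · rw [hva]; exact keyAB.symm
        by_cases hvb : v = b
        · exact absurd (hub.trans hvb.symm) huv'
        · rcases hdegother v hva hvb with h0 | h2
          · rw [key0 v h0]; exact keyPosB.ne'
          · exact (keyA v hva hvb h2).2.ne
      by_cases hva : v = a
      · rw [hva]
        rcases hdegother u hua hub with h0 | h2
        · rw [key0 u h0]; exact keyPosA.ne
        · exact (keyA u hua hub h2).1.ne'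
      by_cases hvb : v = b
      · rw [hvb]
        rcases hdegother u hua hub with h0 | h2
        · rw [key0 u h0]; exact keyPosB.ne
        · exact (keyA u hua hub h2).2.ne'
      · rcases hdegother u hua hub with hu0 | hu2
        · rcases hdegother v hva hvb with hv0 | hv2
          · exfalso
            have := hdistG u v huv'
            rw [hphi0 u hu0, hphi0 v hv0] at this
            exact this rfl
          · rw [key0 u hu0]
            exact (keyPosO v hv2).ne
        · rcases hdegother v hva hvb with hv0 | hv2
          · rw [key0 v hv0]
            exact (keyPosO u hu2).ne'
          · exact keyOld u v hua hub hva hvb huv'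
    · -- inl u vs inr t'
      by_cases hua : u = a
      · rw [hua]; exact keyAT t'
      by_cases hub : u = b
      · rw [hub]; exact keyBT t'
      rcases hdegother u hua hub with h0 | h2
      · rw [key0 u h0]; exact (keyPosT t').ne
      · exact (keyT t' u hua hub h2).ne'
    · -- inr t vs inl v
      by_cases hva : v = a
      · rw [hva]; exact (keyAT t).symm
      by_cases hvb : v = b
      · rw [hvb]; exact (keyBT t).symm
      rcases hdegother v hva hvb with h0 | h2
      · rw [key0 v h0]; exact (keyPosT t).ne'
      · exact (keyT t v hva hvb h2).ne
    · -- inr inr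
      have htt : t ≠ t' := fun h => huv (congrArg Sum.inr h)
      exact keyTT t t' htt
  · -- monotone
    rintro (u | t) (v | t') hlt
    · rw [hdeg_inl u, hdeg_inl v] at hlt
      by_cases hva : v = a
      · rw [if_pos hva, hva, ha] at hlt
        by_cases hua : u = a
        · rw [if_pos hua, hua, ha] at hlt; omega
        by_cases hub : u = b
        · rw [if_neg hua, if_pos hub, hub, hb] at hlt; omega
        · rw [if_neg hua, if_neg hub] at hlt
          rw [hva]
          exact (keyA u hua hub (by omega)).1
      by_cases hvb : v = b
      · rw [if_neg hva, if_pos hvb, hvb, hb] at hlt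
        by_cases hua : u = a
        · rw [if_pos hua, hua, ha] at hlt; omega
        by_cases hub : u = b
        · rw [if_neg hua, if_pos hub, hub, hb] at hlt; omega
        · rw [if_neg hua, if_neg hub] at hlt
          rw [hvb]
          exact (keyA u hua hub (by omega)).2
      rw [if_neg hva, if_neg hvb, add_zero] at hlt
      by_cases hua : u = a
      · rw [if_pos hua, hua, ha] at hlt
        have hv0 : deg G v = 0 := by
          rcases hdegother v hva hvb with h0 | h2 <;> omega
        rw [key0 v hv0, hua]
        exact keyPosA
      by_cases hub : u = b
      · rw [if_neg hua, if_pos hub, hub, hb] at hlt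
        have hv0 : deg G v = 0 := by
          rcases hdegother v hva hvb with h0 | h2 <;> omega
        rw [key0 v hv0, hub]
        exact keyPosB
      · rw [if_neg hua, if_neg hub, add_zero] at hlt
        exact keyOldMono u v hua hub hva hvb hlt
    · -- u : inl, v = inr t'
      rw [hdeg_inl u, hdeg_inr t'] at hlt
      by_cases hua : u = a
      · rw [if_pos hua, hua, ha] at hlt; omega
      by_cases hub : u = b
      · rw [if_neg hua, if_pos hub, hub, hb] at hlt; omega
      · rw [if_neg hua, if_neg hub, add_zero] at hlt
        exact keyT t' u hua hub (by omega)
    · -- u = inr t, v = inl v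
      rw [hdeg_inl v, hdeg_inr t] at hlt
      by_cases hva : v = a
      · rw [if_pos hva, hva, ha] at hlt; omega
      by_cases hvb : v = b
      · rw [if_neg hva, if_pos hvb, hvb, hb] at hlt; omega
      · rw [if_neg hva, if_neg hvb, add_zero] at hlt
        have hv0 : deg G v = 0 := by
          rcases hdegother v hva hvb with h0 | h2 <;> omega
        rw [key0 v hv0]
        exact keyPosT t
    · rw [hdeg_inr t, hdeg_inr t'] at hlt
      omega
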